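/- For all f, g ∈ G: f∘g = (f⊣g)⊢g. -/

import Mathlib

inductive PTree : Type where
  | node : List PTree → PTree

mutual
  def leavesT : PTree → ℕ
    | .node [] => 1
    | .node (t :: ts) => leavesT t + leavesL ts
  def leavesL : List PTree → ℕ
    | [] => 0
    | t :: ts => leavesT t + leavesL ts
end

inductive Reduced : PTree → Prop where
  | leaf : Reduced (.node [])
  | node : ∀ ts : List PTree, 2 ≤ ts.length → (∀ t ∈ ts, Reduced t) → Reduced (.node ts)

mutual
  /-- Replace the leaves of a tree, from left to right, by the trees of a list;
  returns the resulting tree together with the unused trees of the list. -/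
  def graftT : PTree → List PTree → PTree × List PTree
    | .node [], l => (l.headD (.node []), l.tail)
    | .node (c :: cs), l =>
        let p := graftL (c :: cs) l
        (.node p.1, p.2)
  def graftL : List PTree → List PTree → List PTree × List PTree
    | [], l => ([], l)
    | c :: cs, l =>
        let p := graftT c l
        let q := graftL cs p.2
        (p.1 :: q.1, q.2)
end

/-- Schröder trees. -/
def SchT : Type := {t : PTree // Reduced t}

def leafST : SchT := ⟨.node [], Reduced.leaf⟩

/-- Decompositions `t = t₀ ∘ (t₁, …, t_n)` of a Schröder tree, where `t₀` has `n`
leaves. -/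
def Decomps (t : SchT) : Set (SchT × List SchT) :=
  {p | (p.2.map Subtype.val).length = leavesT p.1.val ∧
    (graftT p.1.val (p.2.map Subtype.val)).1 = t.val}

/-- The composition product of the group of the Schröder operad:
`(f∘g)(t) = Σ f(t₀)·g(t₁)⋯g(t_n)` over all decompositions `t = t₀∘(t₁,…,t_n)`. -/
noncomputable def compG (f g : SchT → ℚ) : SchT → ℚ :=
  fun t => ∑ᶠ p ∈ Decomps t, f p.1 * (p.2.map g).prod

/-- `(f⊣g)(t) = Σ f(t₀)·g(t₁)⋯g(t_{n−1})` over decompositions whose last entry is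
the leaf. -/
noncomputable def ldash (f g : SchT → ℚ) : SchT → ℚ :=
  fun t => ∑ᶠ p ∈ {p | p ∈ Decomps t ∧ p.2.getLast? = some leafST},
    f p.1 * (p.2.dropLast.map g).prod

/-- `(f⊢g)(t) = Σ f(t₀)·g(t_n)` over decompositions whose entries `t₁,…,t_{n−1}`
are all leaves. -/
noncomputable def rdash (f g : SchT → ℚ) : SchT → ℚ :=
  fun t => ∑ᶠ p ∈ {p | p ∈ Decomps t ∧ ∀ s ∈ p.2.dropLast, s = leafST},
    f p.1 * g (p.2.getLastD leafST)

/-- The identity element: the indicator function of the leaf. -/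
def eG : SchT → ℚ := fun t =>
  match t.val with
  | .node [] => 1
  | _ => 0


theorem leavesT_pos : ∀ t, 1 ≤ leavesT t
  | .node [] => by simp [leavesT]
  | .node (t :: ts) => by have := leavesT_pos t; simp [leavesT]; omega

mutual
  theorem graftT_snd : ∀ t l, (graftT t l).2 = l.drop (leavesT t)
    | .node [], l => by simp [graftT, leavesT, List.drop_one]
    | .node (c :: cs), l => by
        simp [graftT, leavesT, leavesL, graftL_snd (c :: cs) l]
  theorem graftL_snd : ∀ cs l, (graftL cs l).2 = l.drop (leavesL cs)
    | [], l => by simp [graftL, leavesL]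
    | c :: cs, l => by
        simp [graftL, leavesL, graftT_snd c l, graftL_snd cs _, List.drop_drop, Nat.add_comm]
end

example : True := trivial

def leafP : PTree := .node []

mutual
  theorem graftT_append : ∀ t l₁ l₂, leavesT t ≤ l₁.length →
      graftT t (l₁ ++ l₂) = ((graftT t l₁).1, (graftT t l₁).2 ++ l₂)
    | .node [], l₁, l₂, h => by
        match l₁ with
        | a :: as => simp [graftT]
    | .node (c :: cs), l₁, l₂, h => by
        simp only [leavesT] at h
        simp [graftT, graftL_append (c :: cs) l₁ l₂ (by simp [leavesL]; omega)]
  theorem graftL_append : ∀ cs l₁ l₂, leavesL cs ≤ l₁.length →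
      graftL cs (l₁ ++ l₂) = ((graftL cs l₁).1, (graftL cs l₁).2 ++ l₂)
    | [], l₁, l₂, h => by simp [graftL]
    | c :: cs, l₁, l₂, h => by
        simp only [leavesL] at h
        have h1 : leavesT c ≤ l₁.length := by omega
        have h2 : leavesL cs ≤ ((graftT c l₁).2).length := by
          rw [graftT_snd]; simp; omega
        simp [graftL, graftT_append c l₁ l₂ h1, graftL_append cs _ l₂ h2]
end

mutual
  theorem graftT_replicate : ∀ t, graftT t (List.replicate (leavesT t) leafP) = (t, [])
    | .node [] => by simp [graftT, leavesT, leafP]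
    | .node (c :: cs) => by
        have h : leavesT (.node (c :: cs)) = leavesL (c :: cs) := by
          simp [leavesT, leavesL]
        simp only [graftT, h, graftL_replicate (c :: cs)]
  theorem graftL_replicate : ∀ cs, graftL cs (List.replicate (leavesL cs) leafP) = (cs, [])
    | [] => by simp [graftL, leavesL]
    | c :: cs => by
        have h : leavesL (c :: cs) = leavesT c + leavesL cs := by simp [leavesL]
        rw [h, List.replicate_add]
        simp only [graftL]
        rw [graftT_append c _ _ (by simp), graftT_replicate c]
        simp [graftL_replicate cs]
end

theorem graftL_fst_length : ∀ cs l, (graftL cs l).1.length = cs.length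
  | [], l => by simp [graftL]
  | c :: cs, l => by simp [graftL, graftL_fst_length cs _]

theorem leavesT_node_of_ne_nil (as : List PTree) (h : as ≠ []) :
    leavesT (.node as) = leavesL as := by
  match as with
  | a :: as => simp [leavesT, leavesL]

mutual
  theorem leavesT_graft : ∀ t l, leavesT t ≤ l.length →
      leavesT (graftT t l).1 = ((l.take (leavesT t)).map leavesT).sum
    | .node [], l, h => by
        match l with
        | a :: as => simp [graftT, leavesT]
    | .node (c :: cs), l, h => by
        simp only [leavesT, graftT, graftL] at h ⊢
        have h1 : leavesT c ≤ l.length := by omega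
        have h2 : leavesL cs ≤ ((graftT c l).2).length := by
          rw [graftT_snd]; simp; omega
        rw [leavesT_graft c l h1, leavesL_graft cs _ h2, graftT_snd]
        rw [List.take_add, List.map_append, List.sum_append]
  theorem leavesL_graft : ∀ cs l, leavesL cs ≤ l.length →
      leavesL (graftL cs l).1 = ((l.take (leavesL cs)).map leavesT).sum
    | [], l, h => by simp [graftL, leavesL]
    | c :: cs, l, h => by
        simp only [leavesL, graftL] at h ⊢
        have h1 : leavesT c ≤ l.length := by omega
        have h2 : leavesL cs ≤ ((graftT c l).2).length := by
          rw [graftT_snd]; simp; omega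
        rw [leavesT_graft c l h1, leavesL_graft cs _ h2, graftT_snd]
        rw [List.take_add, List.map_append, List.sum_append]
end

mutual
  def lastReplT : PTree → PTree → PTree
    | .node [], s => s
    | .node (c :: cs), s => .node (lastReplL (c :: cs) s)
  def lastReplL : List PTree → PTree → List PTree
    | [], _ => []
    | [c], s => [lastReplT c s]
    | c :: cs, s => c :: lastReplL cs s
end

theorem lastReplL_cons (c : PTree) (cs : List PTree) (h : cs ≠ []) (s : PTree) :
    lastReplL (c :: cs) s = c :: lastReplL cs s := by
  match cs with
  | d :: ds => simp [lastReplL]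

theorem graftL_cons (c : PTree) (cs l : List PTree) :
    graftL (c :: cs) l = ((graftT c l).1 :: (graftL cs (graftT c l).2).1,
      (graftL cs (graftT c l).2).2) := by
  simp only [graftL]

theorem graftT_node (c : PTree) (cs l : List PTree) :
    graftT (.node (c :: cs)) l = (.node (graftL (c :: cs) l).1, (graftL (c :: cs) l).2) := by
  simp only [graftT]

mutual
  theorem graftT_lastRepl : ∀ t s, graftT t (List.replicate (leavesT t - 1) leafP ++ [s])
      = (lastReplT t s, [])
    | .node [], s => by simp [graftT, leavesT, lastReplT]
    | .node (c :: cs), s => by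
        have h : leavesT (.node (c :: cs)) = leavesL (c :: cs) := by
          simp [leavesT, leavesL]
        rw [h, graftT_node, graftL_lastRepl (c :: cs) s (by simp), lastReplT]
  theorem graftL_lastRepl : ∀ cs s, cs ≠ [] →
      graftL cs (List.replicate (leavesL cs - 1) leafP ++ [s]) = (lastReplL cs s, [])
    | [c], s, _ => by
        have h : leavesL [c] = leavesT c := by simp [leavesL]
        rw [h, graftL_cons, graftT_lastRepl c s]
        simp [graftL, lastReplL]
    | c :: d :: ds, s, _ => by
        have h : leavesL (c :: d :: ds) - 1 = leavesT c + (leavesL (d :: ds) - 1) := by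
          have h1 := leavesT_pos d
          simp [leavesL]
          omega
        rw [h, List.replicate_add, List.append_assoc, graftL_cons,
          graftT_append c _ _ (by simp), graftT_replicate c]
        simp only [Prod.fst, Prod.snd, List.nil_append]
        rw [graftL_lastRepl (d :: ds) s (by simp),
          lastReplL_cons c (d :: ds) (by simp)]
end

theorem lastReplT_node_ne_nil (as : List PTree) (h : as ≠ []) (s : PTree) :
    lastReplT (.node as) s = .node (lastReplL as s) := by
  match as with
  | a :: as => simp [lastReplT]

theorem graftL_cons_split (c : PTree) (cs l₁ l₂ : List PTree)
    (h : l₁.length = leavesT c) :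
    graftL (c :: cs) (l₁ ++ l₂)
      = ((graftT c l₁).1 :: (graftL cs l₂).1, (graftL cs l₂).2) := by
  rw [graftL_cons, graftT_append c _ _ (le_of_eq h.symm), graftT_snd, ← h]
  simp

mutual
  theorem lastRepl_graft : ∀ t l s, l.length + 1 = leavesT t →
      lastReplT (graftT t (l ++ [leafP])).1 s = (graftT t (l ++ [s])).1
    | .node [], l, s, h => by
        simp only [leavesT] at h
        have : l = [] := by simpa using h
        subst this
        simp [graftT, lastReplT, leafP]
    | .node (c :: cs), l, s, h => by
        rw [leavesT_node_of_ne_nil _ (by simp)] at h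
        rw [graftT_node, graftT_node]
        have hlen : (graftL (c :: cs) (l ++ [leafP])).1.length = cs.length + 1 := by
          simp [graftL_fst_length]
        rw [lastReplT_node_ne_nil _ (by intro hx; rw [hx] at hlen; simp at hlen)]
        rw [lastReplL_graft (c :: cs) l s (by simp) h]
  theorem lastReplL_graft : ∀ cs l s, cs ≠ [] → l.length + 1 = leavesL cs →
      lastReplL (graftL cs (l ++ [leafP])).1 s = (graftL cs (l ++ [s])).1
    | [c], l, s, _, h => by
        have hc : leavesL [c] = leavesT c := by simp [leavesL]
        rw [hc] at h
        rw [graftL_cons, graftL_cons]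
        simp only [graftL]
        rw [lastReplL, lastRepl_graft c l s h]
    | c :: d :: ds, l, s, _, h => by
        have hd := leavesT_pos d
        have hcc : leavesL (c :: d :: ds) = leavesT c + leavesL (d :: ds) := by
          simp [leavesL]
        have hdd : leavesT d ≤ leavesL (d :: ds) := by simp [leavesL]
        rw [hcc] at h
        have h1 : leavesT c ≤ l.length := by omega
        have hsplit : l = l.take (leavesT c) ++ l.drop (leavesT c) := by simp
        rw [hsplit, List.append_assoc, List.append_assoc,
          graftL_cons_split c _ _ _ (by simp [h1]),
          graftL_cons_split c _ _ _ (by simp [h1])]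
        have h3 : (List.drop (leavesT c) l).length + 1 = leavesL (d :: ds) := by
          simp; omega
        have hlen2 : (graftL (d :: ds) (l.drop (leavesT c) ++ [leafP])).1.length
            = ds.length + 1 := by simp [graftL_fst_length]
        rw [lastReplL_cons _ _ (by intro hx; rw [hx] at hlen2; simp at hlen2)]
        rw [lastReplL_graft (d :: ds) _ s (by simp) h3]
end

mutual
  theorem graftT_inj : ∀ t l l', l.length = leavesT t → l'.length = leavesT t →
      (graftT t l).1 = (graftT t l').1 → l = l'
    | .node [], l, l', h, h', he => by
        simp only [leavesT] at h h'
        match l, l' with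
        | [a], [a'] => simpa [graftT] using he
    | .node (c :: cs), l, l', h, h', he => by
        rw [leavesT_node_of_ne_nil _ (by simp)] at h h'
        rw [graftT_node, graftT_node] at he
        simp only [Prod.fst] at he
        exact graftL_inj (c :: cs) l l' h h' (by injection he)
  theorem graftL_inj : ∀ cs l l', l.length = leavesL cs → l'.length = leavesL cs →
      (graftL cs l).1 = (graftL cs l').1 → l = l'
    | [], l, l', h, h', _ => by
        simp only [leavesL] at h h'
        rw [List.eq_nil_of_length_eq_zero h, List.eq_nil_of_length_eq_zero h']
    | c :: cs, l, l', h, h', he => by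
        simp only [leavesL] at h h'
        have h1 : (l.take (leavesT c)).length = leavesT c := by simp; omega
        have h1' : (l'.take (leavesT c)).length = leavesT c := by simp; omega
        have e : l = l.take (leavesT c) ++ l.drop (leavesT c) := by simp
        have e' : l' = l'.take (leavesT c) ++ l'.drop (leavesT c) := by simp
        rw [e, graftL_cons_split c _ _ _ h1] at he
        rw [e', graftL_cons_split c _ _ _ h1'] at he
        simp only [Prod.fst, List.cons.injEq] at he
        have d1 : (l.drop (leavesT c)).length = leavesL cs := by simp; omega
        have d1' : (l'.drop (leavesT c)).length = leavesL cs := by simp; omega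
        rw [e, e', graftT_inj c _ _ h1 h1' he.1, graftL_inj cs _ _ d1 d1' he.2]
end


mutual
  theorem graftT_red : ∀ t l, Reduced t → (∀ u ∈ l, Reduced u) →
      Reduced (graftT t l).1
    | .node [], l, _, hl => by
        match l with
        | [] => exact Reduced.leaf
        | a :: as => exact hl a (by simp)
    | .node (c :: cs), l, ht, hl => by
        rw [graftT_node]
        have hlen : (graftL (c :: cs) l).1.length = (c :: cs).length := by
          simp [graftL_fst_length]
        cases ht with
        | node _ h2 hall =>
          exact Reduced.node _ (hlen ▸ h2) (graftL_red (c :: cs) l hall hl)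
  theorem graftL_red : ∀ cs l, (∀ c ∈ cs, Reduced c) → (∀ u ∈ l, Reduced u) →
      ∀ u ∈ (graftL cs l).1, Reduced u
    | [], l, _, _ => by simp [graftL]
    | c :: cs, l, hcs, hl => by
        rw [graftL_cons]
        intro u hu
        simp only [List.mem_cons] at hu
        rcases hu with rfl | hu
        · exact graftT_red c l (hcs c (by simp)) hl
        · refine graftL_red cs (graftT c l).2 (fun x hx => hcs x (by simp [hx])) ?_ u hu
          intro x hx
          rw [graftT_snd] at hx
          exact hl x (List.mem_of_mem_drop hx)
end

mutual
  def sizeT : PTree → ℕ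
    | .node ts => 1 + sizeL ts
  def sizeL : List PTree → ℕ
    | [] => 0
    | t :: ts => sizeT t + sizeL ts
end

theorem sizeT_pos : ∀ t, 1 ≤ sizeT t
  | .node ts => by simp [sizeT]

theorem sizeT_mem_le (t : PTree) : ∀ ts, t ∈ ts → sizeT t ≤ sizeL ts
  | c :: cs, h => by
    rcases List.mem_cons.1 h with rfl | h
    · simp [sizeL]
    · have := sizeT_mem_le t cs h
      simp [sizeL]; omega

theorem length_le_sizeL : ∀ ts : List PTree, ts.length ≤ sizeL ts
  | [] => by simp [sizeL]
  | c :: cs => by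
    have := length_le_sizeL cs
    have := sizeT_pos c
    simp [sizeL]; omega

mutual
  theorem leavesT_le_sizeT : ∀ t, leavesT t ≤ sizeT t
    | .node [] => by simp [leavesT, sizeT, sizeL]
    | .node (c :: cs) => by
        have h1 := leavesT_le_sizeT c
        have h2 := leavesL_le_sizeL cs
        simp [leavesT, sizeT, sizeL]; omega
  theorem leavesL_le_sizeL : ∀ ts, leavesL ts ≤ sizeL ts
    | [] => by simp [leavesL, sizeL]
    | c :: cs => by
        have h1 := leavesT_le_sizeT c
        have h2 := leavesL_le_sizeL cs
        simp [leavesL, sizeL]; omega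
end

theorem graftL_cons' (c : PTree) (cs l : List PTree) (h : leavesT c ≤ l.length) :
    graftL (c :: cs) l
      = ((graftT c (l.take (leavesT c))).1 :: (graftL cs (l.drop (leavesT c))).1,
         (graftL cs (l.drop (leavesT c))).2) := by
  conv_lhs => rw [show l = l.take (leavesT c) ++ l.drop (leavesT c) by simp]
  rw [graftL_cons_split c _ _ _ (by simp; omega)]

mutual
  theorem sizeT_graft : ∀ t l, leavesT t ≤ l.length →
      sizeT (graftT t l).1 + leavesT t = sizeT t + ((l.take (leavesT t)).map sizeT).sum
    | .node [], l, h => by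
        match l with
        | a :: as => simp [graftT, leavesT, sizeT, sizeL, Nat.add_comm]
    | .node (c :: cs), l, h => by
        rw [leavesT_node_of_ne_nil _ (by simp)] at h ⊢
        rw [graftT_node]
        have hlen : (graftL (c :: cs) l).1.length = cs.length + 1 := by
          simp [graftL_fst_length]
        have key := sizeL_graft (c :: cs) l h
        have e1 : sizeT (.node (graftL (c :: cs) l).1) = 1 + sizeL (graftL (c :: cs) l).1 := by
          simp [sizeT]
        have e2 : sizeT (.node (c :: cs)) = 1 + sizeL (c :: cs) := by simp [sizeT]
        simp only [Prod.fst] at *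
        omega
  theorem sizeL_graft : ∀ cs l, leavesL cs ≤ l.length →
      sizeL (graftL cs l).1 + leavesL cs = sizeL cs + ((l.take (leavesL cs)).map sizeT).sum
    | [], l, h => by simp [graftL, leavesL, sizeL]
    | c :: cs, l, h => by
        simp only [leavesL] at h ⊢
        have h1 : (l.take (leavesT c)).length = leavesT c := by simp; omega
        rw [graftL_cons' c cs l (by omega)]
        have d1 : leavesL cs ≤ (l.drop (leavesT c)).length := by simp; omega
        have k1 := sizeT_graft c (l.take (leavesT c)) (le_of_eq h1.symm)
        have k2 := sizeL_graft cs (l.drop (leavesT c)) d1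
        rw [List.take_take, min_self] at k1
        simp only [Prod.fst] at *
        have e3 : sizeL ((graftT c (l.take (leavesT c))).1 :: (graftL cs (l.drop (leavesT c))).1)
            = sizeT (graftT c (l.take (leavesT c))).1 + sizeL (graftL cs (l.drop (leavesT c))).1 := by
          simp [sizeL]
        have e4 : sizeL (c :: cs) = sizeT c + sizeL cs := by simp [sizeL]
        rw [List.take_add, List.map_append, List.sum_append]
        omega
end

theorem finite_size_le : ∀ N : ℕ, {p : PTree | sizeT p ≤ N}.Finite := by
  intro N
  induction N with
  | zero =>
      convert Set.finite_empty
      ext p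
      simp only [Set.mem_setOf_eq, Set.mem_empty_iff_false, iff_false]
      have := sizeT_pos p
      omega
  | succ N ih =>
      have : Finite {p : PTree // sizeT p ≤ N} := ih.to_subtype
      have hfin : {l : List {p : PTree // sizeT p ≤ N} | l.length ≤ N}.Finite :=
        List.finite_length_le _ N
      have : Finite {l : List {p : PTree // sizeT p ≤ N} // l.length ≤ N} :=
        hfin.to_subtype
      let F : {l : List {p : PTree // sizeT p ≤ N} // l.length ≤ N} → PTree :=
        fun l => .node (l.1.map Subtype.val)
      apply Set.Finite.subset (Set.finite_range F)
      rintro ⟨ts⟩ hp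
      simp only [Set.mem_setOf_eq, sizeT] at hp
      have hts : ∀ t ∈ ts, sizeT t ≤ N := by
        intro t ht
        have := sizeT_mem_le t ts ht
        omega
      have hlen : ts.length ≤ N := by
        have := length_le_sizeL ts
        omega
      refine ⟨⟨ts.attach.map (fun x => ⟨x.1, hts x.1 x.2⟩), by simpa using hlen⟩, ?_⟩
      show PTree.node _ = PTree.node ts
      congr 1
      rw [List.map_map]
      exact List.attach_map_subtype_val ts

-- helpers on lists
theorem list_eq_dropLast_getLast? {α : Type*} (l : List α) (a : α)
    (h : l.getLast? = some a) : l = l.dropLast ++ [a] := by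
  match l with
  | [] => simp at h
  | b :: bs =>
      have hne : b :: bs ≠ [] := by simp
      rw [List.getLast?_eq_getLast hne] at h
      have h2 := List.dropLast_append_getLast hne
      simp at h
      rw [h] at h2
      exact h2.symm

theorem list_eq_dropLast_getLastD {α : Type*} (l : List α) (d : α) (h : l ≠ []) :
    l = l.dropLast ++ [l.getLastD d] := by
  have h1 : l.getLast? = some (l.getLast h) := List.getLast?_eq_getLast h
  have h2 : l.getLastD d = l.getLast h := by
    rw [List.getLastD_eq_getLast?, h1]; rfl
  rw [h2]
  exact (List.dropLast_append_getLast h).symm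

theorem list_eq_replicate_concat {α : Type*} (l : List α) (d : α) (h : l ≠ [])
    (hall : ∀ s ∈ l.dropLast, s = d) :
    l = List.replicate (l.length - 1) d ++ [l.getLastD d] := by
  conv_lhs => rw [list_eq_dropLast_getLastD l d h]
  congr 1
  rw [List.eq_replicate_iff]
  exact ⟨by simp [List.length_dropLast], hall⟩


theorem map_val_length_SchT (l : List SchT) : (l.map Subtype.val).length = l.length :=
  List.length_map ..

theorem decomps_finite (t : SchT) : (Decomps t).Finite := by
  classical
  set DP : Set (PTree × List PTree) :=
    {q | q.2.length = leavesT q.1 ∧ (graftT q.1 q.2).1 = t.val} with hDP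
  have hDPfin : DP.Finite := by
    have himg : (Prod.fst '' DP) ⊆ {u | sizeT u ≤ sizeT t.val} := by
      rintro u ⟨⟨u0, l⟩, ⟨hlen, hg⟩, rfl⟩
      simp only [Set.mem_setOf_eq]
      have hle : leavesT u0 ≤ l.length := le_of_eq hlen.symm
      have key := sizeT_graft u0 l hle
      have hsum : leavesT u0 ≤ ((l.take (leavesT u0)).map sizeT).sum := by
        have h1 : ((l.take (leavesT u0)).map sizeT).length = leavesT u0 := by
          simp; omega
        have := List.length_le_sum_of_one_le ((l.take (leavesT u0)).map sizeT) ?_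
        · omega
        · intro i hi
          rcases List.mem_map.1 hi with ⟨x, _, rfl⟩
          exact sizeT_pos x
      rw [hg] at key
      omega
    have hfst : (Prod.fst '' DP).Finite :=
      (finite_size_le (sizeT t.val)).subset himg
    refine Set.Finite.of_finite_image hfst ?_
    rintro ⟨u0, l⟩ hu ⟨u0', l'⟩ hu' (h : u0 = u0')
    subst h
    obtain ⟨hl1, hg1⟩ := hu
    obtain ⟨hl2, hg2⟩ := hu'
    have := graftT_inj u0 l l' hl1 hl2 (by rw [hg1, hg2])
    rw [this]
  have : Decomps t = (fun p : SchT × List SchT => (p.1.val, p.2.map Subtype.val)) ⁻¹' DP := by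
    ext p
    simp [Decomps, hDP, Set.mem_preimage, Set.mem_setOf_eq]
  rw [this]
  apply Set.Finite.preimage ?_ hDPfin
  intro p _ q _ h
  simp only [Prod.mk.injEq] at h
  have h1 : p.1 = q.1 := Subtype.ext h.1
  have h2 : p.2 = q.2 :=
    List.map_injective_iff.2 Subtype.val_injective h.2
  exact Prod.ext h1 h2

theorem chain (t₀ : SchT) (L : List SchT) (sm : PTree)
    (hlen : L.length + 1 = leavesT t₀.val) :
    (graftT t₀.val ((L.map Subtype.val) ++ [sm])).1
      = (graftT (graftT t₀.val ((L.map Subtype.val) ++ [leafP])).1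
          (List.replicate
            (leavesT (graftT t₀.val ((L.map Subtype.val) ++ [leafP])).1 - 1) leafP
            ++ [sm])).1 := by
  rw [graftT_lastRepl]
  exact (lastRepl_graft t₀.val (L.map Subtype.val) sm (by simpa [map_val_length_SchT] using hlen)).symm


def graftS (t₀ : SchT) (l : List SchT) : SchT :=
  ⟨(graftT t₀.val (l.map Subtype.val)).1,
   graftT_red _ _ t₀.2 (by
     intro u hu
     rcases List.mem_map.1 hu with ⟨x, _, rfl⟩
     exact x.2)⟩

theorem snd_ne_nil_of_decomps {s : SchT} {p : SchT × List SchT} (hp : p ∈ Decomps s) :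
    p.2 ≠ [] := by
  intro h
  have h1 := hp.1
  have h2 := leavesT_pos p.1.val
  rw [h] at h1
  simp [map_val_length_SchT] at h1
  omega

theorem snd_length_of_decomps {s : SchT} {p : SchT × List SchT} (hp : p ∈ Decomps s) :
    p.2.length = leavesT p.1.val := by simpa [map_val_length_SchT] using hp.1

theorem graft_last_eq (q1 : SchT) (L : List SchT) (sm : SchT)
    (hlen : L.length + 1 = leavesT q1.val) :
    (graftT (graftS q1 (L ++ [leafST])).val
        ((List.replicate (leavesT (graftS q1 (L ++ [leafST])).val - 1) leafST
          ++ [sm]).map Subtype.val)).1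
      = (graftT q1.val ((L ++ [sm]).map Subtype.val)).1 := by
  have e0 : (L ++ [leafST]).map Subtype.val = L.map Subtype.val ++ [leafP] := by
    exact List.map_append ..
  have e1 : (L ++ [sm]).map Subtype.val = L.map Subtype.val ++ [sm.val] := by exact List.map_append ..
  have e2 : ∀ k : ℕ, (List.replicate k leafST ++ [sm]).map Subtype.val
      = List.replicate k leafP ++ [sm.val] := by
    intro k
    induction k with
    | zero => rfl
    | succ k ih => exact congrArg (leafP :: ·) ih
  have hs : (graftS q1 (L ++ [leafST])).val
      = (graftT q1.val (L.map Subtype.val ++ [leafP])).1 := by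
    show (graftT q1.val ((L ++ [leafST]).map Subtype.val)).1 = _
    rw [e0]
  rw [e1, e2, hs]
  exact (chain q1 L sm.val hlen).symm

theorem dropLast_length_succ {α : Type*} {l : List α} (h : l ≠ []) :
    l.dropLast.length + 1 = l.length := by
  rw [List.length_dropLast]
  have : 0 < l.length := List.length_pos_iff.2 h
  omega


/-- for all `f, g ∈ G`, `f∘g = (f⊣g)⊢g`. -/
theorem stmt13 (f g : SchT → ℚ) (hf : f leafST = 1) (hg : g leafST = 1) :
    compG f g = rdash (ldash f g) g := by
  classical
  funext t
  have hD := decomps_finite t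
  have hA : {p : SchT × List SchT |
      p ∈ Decomps t ∧ ∀ s ∈ p.2.dropLast, s = leafST}.Finite :=
    hD.subset fun p hp => hp.1
  have hB : ∀ s : SchT, {q : SchT × List SchT |
      q ∈ Decomps s ∧ q.2.getLast? = some leafST}.Finite :=
    fun s => (decomps_finite s).subset fun q hq => hq.1
  have hld : ∀ s : SchT, ldash f g s
      = ∑ q ∈ (hB s).toFinset, f q.1 * (q.2.dropLast.map g).prod := by
    intro s
    show (∑ᶠ q ∈ {q : SchT × List SchT |
      q ∈ Decomps s ∧ q.2.getLast? = some leafST}, f q.1 * (q.2.dropLast.map g).prod) = _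
    exact finsum_mem_eq_finite_toFinset_sum _ (hB s)
  have hcomp : compG f g t = ∑ y ∈ hD.toFinset, f y.1 * (y.2.map g).prod := by
    show (∑ᶠ y ∈ Decomps t, f y.1 * (y.2.map g).prod) = _
    exact finsum_mem_eq_finite_toFinset_sum _ hD
  have hrd : rdash (ldash f g) g t
      = ∑ p ∈ hA.toFinset, ldash f g p.1 * g (p.2.getLastD leafST) := by
    show (∑ᶠ p ∈ {p : SchT × List SchT |
      p ∈ Decomps t ∧ ∀ s ∈ p.2.dropLast, s = leafST},
        ldash f g p.1 * g (p.2.getLastD leafST)) = _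
    exact finsum_mem_eq_finite_toFinset_sum _ hA
  rw [hcomp, hrd]
  have step : ∀ p ∈ hA.toFinset,
      ldash f g p.1 * g (p.2.getLastD leafST)
        = ∑ q ∈ (hB p.1).toFinset,
            f q.1 * (q.2.dropLast.map g).prod * g (p.2.getLastD leafST) := by
    intro p _
    rw [hld p.1, Finset.sum_mul]
  rw [Finset.sum_congr rfl step]
  rw [← Finset.sum_sigma hA.toFinset (fun p => (hB p.1).toFinset)
    (fun x => f x.2.1 * (x.2.2.dropLast.map g).prod * g (x.1.2.getLastD leafST))]
  refine Finset.sum_bij'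
    (i := fun y (_ : y ∈ hD.toFinset) =>
      (⟨(graftS y.1 (y.2.dropLast ++ [leafST]),
          List.replicate (leavesT (graftS y.1 (y.2.dropLast ++ [leafST])).val - 1) leafST
            ++ [y.2.getLastD leafST]),
        (y.1, y.2.dropLast ++ [leafST])⟩ :
        (_ : SchT × List SchT) × (SchT × List SchT)))
    (j := fun x _ => (x.2.1, x.2.2.dropLast ++ [x.1.2.getLastD leafST]))
    ?_ ?_ ?_ ?_ ?_
  · -- i maps into the sigma set
    intro y hy
    rw [Set.Finite.mem_toFinset] at hy
    have hylen := snd_length_of_decomps hy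
    have hyne := snd_ne_nil_of_decomps hy
    have hyg : (graftT y.1.val (y.2.map Subtype.val)).1 = t.val := hy.2
    have hLlen : y.2.dropLast.length + 1 = leavesT y.1.val := by
      rw [dropLast_length_succ hyne]; exact hylen
    have hy2 : y.2 = y.2.dropLast ++ [y.2.getLastD leafST] :=
      list_eq_dropLast_getLastD y.2 leafST hyne
    have hkey := graft_last_eq y.1 y.2.dropLast (y.2.getLastD leafST) hLlen
    rw [← hy2, hyg] at hkey
    have hmpos := leavesT_pos (graftS y.1 (y.2.dropLast ++ [leafST])).val
    rw [Finset.mem_sigma]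
    constructor
    · rw [Set.Finite.mem_toFinset]
      refine ⟨⟨?_, ?_⟩, ?_⟩
      · simp only [map_val_length_SchT, List.length_map, List.length_append, List.length_replicate,
          List.length_singleton]
        omega
      · exact hkey
      · intro s hs
        rw [List.dropLast_concat] at hs
        exact List.eq_of_mem_replicate hs
    · rw [Set.Finite.mem_toFinset]
      refine ⟨⟨?_, ?_⟩, ?_⟩
      · simp only [map_val_length_SchT, List.length_map, List.length_append, List.length_singleton]
        omega
      · rfl
      · exact List.getLast?_concat
  · -- j maps into hD.toFinset
    rintro ⟨p, q⟩ hx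
    rw [Finset.mem_sigma, Set.Finite.mem_toFinset, Set.Finite.mem_toFinset] at hx
    obtain ⟨⟨hpD, hpAll⟩, hqD, hqlast⟩ := hx
    have hplen := snd_length_of_decomps hpD
    have hpne := snd_ne_nil_of_decomps hpD
    have hqlen := snd_length_of_decomps hqD
    have hqne : q.2 ≠ [] := by
      intro h; rw [h] at hqlast; simp at hqlast
    have hq2 : q.2 = q.2.dropLast ++ [leafST] :=
      list_eq_dropLast_getLast? q.2 leafST hqlast
    have hLlen : q.2.dropLast.length + 1 = leavesT q.1.val := by
      rw [dropLast_length_succ hqne]; exact hqlen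
    have hS : graftS q.1 (q.2.dropLast ++ [leafST]) = p.1 := by
      apply Subtype.ext
      show (graftT q.1.val ((q.2.dropLast ++ [leafST]).map Subtype.val)).1 = p.1.val
      rw [← hq2]
      exact hqD.2
    have hp2 : p.2 = List.replicate (p.2.length - 1) leafST ++ [p.2.getLastD leafST] :=
      list_eq_replicate_concat p.2 leafST hpne hpAll
    have hkey := graft_last_eq q.1 q.2.dropLast (p.2.getLastD leafST) hLlen
    rw [hS, ← hplen, ← hp2] at hkey
    rw [Set.Finite.mem_toFinset]
    refine ⟨?_, ?_⟩
    · simp only [map_val_length_SchT, List.length_map, List.length_append, List.length_singleton]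
      omega
    · show (graftT q.1.val ((q.2.dropLast ++ [p.2.getLastD leafST]).map Subtype.val)).1
        = t.val
      rw [← hkey]
      exact hpD.2
  · -- left inverse
    intro y hy
    rw [Set.Finite.mem_toFinset] at hy
    have hyne := snd_ne_nil_of_decomps hy
    simp only [List.dropLast_concat, List.getLastD_concat]
    exact Prod.ext rfl (list_eq_dropLast_getLastD y.2 leafST hyne).symm
  · -- right inverse
    rintro ⟨p, q⟩ hx
    rw [Finset.mem_sigma, Set.Finite.mem_toFinset, Set.Finite.mem_toFinset] at hx
    obtain ⟨⟨hpD, hpAll⟩, hqD, hqlast⟩ := hx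
    have hplen := snd_length_of_decomps hpD
    have hpne := snd_ne_nil_of_decomps hpD
    have hqne : q.2 ≠ [] := by
      intro h; rw [h] at hqlast; simp at hqlast
    have hq2 : q.2 = q.2.dropLast ++ [leafST] :=
      list_eq_dropLast_getLast? q.2 leafST hqlast
    have hS : graftS q.1 (q.2.dropLast ++ [leafST]) = p.1 := by
      apply Subtype.ext
      show (graftT q.1.val ((q.2.dropLast ++ [leafST]).map Subtype.val)).1 = p.1.val
      rw [← hq2]
      exact hqD.2
    have hp2 : p.2 = List.replicate (p.2.length - 1) leafST ++ [p.2.getLastD leafST] :=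
      list_eq_replicate_concat p.2 leafST hpne hpAll
    simp only [List.dropLast_concat, List.getLastD_concat]
    rw [hS]
    have h2 : (q.1, q.2.dropLast ++ [leafST]) = q := Prod.ext rfl hq2.symm
    have h3 : List.replicate (leavesT p.1.val - 1) leafST ++ [p.2.getLastD leafST]
        = p.2 := by rw [← hplen, ← hp2]
    rw [h2, h3]
  · -- summand equality
    intro y hy
    rw [Set.Finite.mem_toFinset] at hy
    have hyne := snd_ne_nil_of_decomps hy
    simp only [List.dropLast_concat, List.getLastD_concat]
    conv_lhs => rw [list_eq_dropLast_getLastD y.2 leafST hyne]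
    rw [List.map_append, List.prod_append]
    simp [mul_assoc]
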